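/- Let G₁, G₁′, G₂, G₂′ be simple graphs, each on n vertices with m edges. If LE(G₁) = LE(G₁′) and LE(G₂) = LE(G₂′), then LE(G₁ ∨ G₂) = LE(G₁′ ∨ G₂′). -/

import Mathlib

open SimpleGraph Matrix Finset

/-- The number of edges of a simple graph. -/
noncomputable def edgeCount {V : Type*} (G : SimpleGraph V) : ℕ := G.edgeSet.ncard

/-- The Laplacian spectrum of a finite simple graph, as a multiset of real numbers. -/
noncomputable def lapSpec {V : Type*} [Fintype V] (G : SimpleGraph V) : Multiset ℝ := by
  classical
  exact Finset.univ.val.map (G.posSemidef_lapMatrix ℝ).1.eigenvalues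

/-- The signless Laplacian matrix `D + A` is Hermitian. -/
theorem signless_isHermitian {V : Type*} [Fintype V] [DecidableEq V] (G : SimpleGraph V)
    [DecidableRel G.Adj] : (G.degMatrix ℝ + G.adjMatrix ℝ).IsHermitian := by
  rw [Matrix.IsHermitian, conjTranspose_eq_transpose_of_trivial]
  exact Matrix.IsSymm.add (isSymm_degMatrix (R := ℝ) (G := G)) (isSymm_adjMatrix G)

/-- The signless Laplacian spectrum of a finite simple graph, as a multiset of reals. -/
noncomputable def signlessLapSpec {V : Type*} [Fintype V] (G : SimpleGraph V) : Multiset ℝ := by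
  classical
  exact Finset.univ.val.map (signless_isHermitian G).eigenvalues

/-- The Laplacian energy `LE(G) = ∑ |μ_i - 2m/n|`. -/
noncomputable def lapEnergy {V : Type*} [Fintype V] (G : SimpleGraph V) : ℝ :=
  ((lapSpec G).map (fun x => |x - 2 * (edgeCount G : ℝ) / (Fintype.card V : ℝ)|)).sum

/-- The signless Laplacian energy `LE⁺(G) = ∑ |μ⁺_i - 2m/n|`. -/
noncomputable def signlessLapEnergy {V : Type*} [Fintype V] (G : SimpleGraph V) : ℝ :=
  ((signlessLapSpec G).map (fun x => |x - 2 * (edgeCount G : ℝ) / (Fintype.card V : ℝ)|)).sum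

/-- The join `G ∨ H` of two graphs: disjoint union plus all edges between them. -/
def SimpleGraph.join {V W : Type*} (G : SimpleGraph V) (H : SimpleGraph W) :
    SimpleGraph (V ⊕ W) where
  Adj a b :=
    match a, b with
    | Sum.inl u, Sum.inl v => G.Adj u v
    | Sum.inr u, Sum.inr v => H.Adj u v
    | Sum.inl _, Sum.inr _ => True
    | Sum.inr _, Sum.inl _ => True
  symm := ⟨by rintro (u | u) (v | v) h <;> simp_all [adj_comm]⟩
  loopless := ⟨by rintro (u | u) h <;> simp_all⟩

/-- The tensor (Kronecker) product `G ⊗ H` of two graphs. -/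
def SimpleGraph.tensorProd {V W : Type*} (G : SimpleGraph V) (H : SimpleGraph W) :
    SimpleGraph (V × W) where
  Adj a b := G.Adj a.1 b.1 ∧ H.Adj a.2 b.2
  symm := ⟨fun a b h => ⟨G.adj_symm h.1, H.adj_symm h.2⟩⟩
  loopless := ⟨fun a h => G.irrefl h.1⟩


open Polynomial in
lemma multiset_eq_of_prod (s t : Multiset ℝ) (F : Finset ℝ)
    (h : ∀ x : ℝ, x ∉ F → (s.map (x - ·)).prod = (t.map (x - ·)).prod) : s = t := by
  have hP : (s.map (fun a => X - C a)).prod = (t.map (fun a => X - C a)).prod := by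
    apply Polynomial.eq_of_infinite_eval_eq
    apply Set.Infinite.mono (s := (↑F : Set ℝ)ᶜ)
    · intro x hx
      have := h x (by simpa using hx)
      simpa [eval_multiset_prod, Multiset.map_map, Function.comp] using this
    · exact Set.Finite.infinite_compl (F.finite_toSet)
  have := congrArg Polynomial.roots hP
  rwa [Polynomial.roots_multiset_prod_X_sub_C, Polynomial.roots_multiset_prod_X_sub_C] at this

lemma eig_congr {V : Type*} [Fintype V] {A B : Matrix V V ℝ} (i1 i2 : DecidableEq V)
    (h : A = B) (hA : A.IsHermitian) (hB : B.IsHermitian) :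
    @Matrix.IsHermitian.eigenvalues ℝ _ V _ A i1 hA
      = @Matrix.IsHermitian.eigenvalues ℝ _ V _ B i2 hB := by
  subst h
  obtain rfl : i1 = i2 := Subsingleton.elim _ _
  rfl

lemma lapSpec_def {V : Type*} [Fintype V] [DecidableEq V] (G : SimpleGraph V)
    [DecidableRel G.Adj] (h : (G.lapMatrix ℝ).IsHermitian) :
    lapSpec G = Finset.univ.val.map h.eigenvalues := by
  unfold lapSpec
  congr 1
  apply eig_congr
  congr! <;> exact Subsingleton.elim _ _

lemma det_smul_one_sub {V : Type*} [Fintype V] [DecidableEq V] {A : Matrix V V ℝ}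
    (hA : A.IsHermitian) (x : ℝ) :
    (x • (1 : Matrix V V ℝ) - A).det = ∏ i, (x - hA.eigenvalues i) := by
  have hU := (Matrix.mem_unitaryGroup_iff).mp (hA.eigenvectorUnitary).2
  have hU' := (Matrix.mem_unitaryGroup_iff').mp (hA.eigenvectorUnitary).2
  nth_rewrite 1 [hA.spectral_theorem, Unitary.conjStarAlgAut_apply]
  have h1 : x • (1 : Matrix V V ℝ)
      = (hA.eigenvectorUnitary : Matrix V V ℝ) * (x • 1)
        * (star hA.eigenvectorUnitary : Matrix V V ℝ) := by
    rw [Matrix.mul_smul, Matrix.mul_one, Matrix.smul_mul, hU]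
  rw [h1, ← Matrix.sub_mul, ← Matrix.mul_sub, det_mul, det_mul, mul_comm, ← mul_assoc,
    ← det_mul, hU', det_one, one_mul]
  have h2 : x • (1 : Matrix V V ℝ) - diagonal (RCLike.ofReal ∘ hA.eigenvalues)
      = diagonal (fun i => x - hA.eigenvalues i) := by
    ext i j
    rcases eq_or_ne i j with rfl | hij
    · simp [Matrix.one_apply_eq]
    · simp [Matrix.one_apply_ne hij, Matrix.diagonal_apply_ne _ hij]
  rw [h2, det_diagonal]

instance joinDecidable {V W : Type*} (G : SimpleGraph V) (H : SimpleGraph W)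
    [DecidableRel G.Adj] [DecidableRel H.Adj] : DecidableRel (G.join H).Adj := fun a b =>
  match a, b with
  | Sum.inl u, Sum.inl v => (inferInstance : Decidable (G.Adj u v))
  | Sum.inr u, Sum.inr v => (inferInstance : Decidable (H.Adj u v))
  | Sum.inl _, Sum.inr _ => .isTrue trivial
  | Sum.inr _, Sum.inl _ => .isTrue trivial

section JoinBasics
variable {V W : Type*} [Fintype V] [Fintype W] [DecidableEq V] [DecidableEq W]

lemma join_degree_inl (G : SimpleGraph V) (H : SimpleGraph W)
    [DecidableRel G.Adj] [DecidableRel H.Adj] (u : V) :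
    (G.join H).degree (Sum.inl u) = G.degree u + Fintype.card W := by
  classical
  have h1 := SimpleGraph.degree_eq_sum_if_adj (R := ℕ) (G.join H) (Sum.inl u)
  have h2 := SimpleGraph.degree_eq_sum_if_adj (R := ℕ) G u
  rw [Fintype.sum_sum_type] at h1
  simp only [Nat.cast_id] at h1 h2
  rw [h1, h2]
  have h3 : ∀ w : W, (if (G.join H).Adj (Sum.inl u) (Sum.inr w) then 1 else 0) = 1 := by
    intro w; simp [SimpleGraph.join]
  simp only [h3]
  have e1 : (∑ v : V, if (G.join H).Adj (Sum.inl u) (Sum.inl v) then 1 else 0)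
      = ∑ v : V, if G.Adj u v then 1 else 0 :=
    Finset.sum_congr rfl fun v _ => if_congr Iff.rfl rfl rfl
  rw [e1, Finset.sum_const, smul_eq_mul, mul_one, Finset.card_univ]

lemma join_degree_inr (G : SimpleGraph V) (H : SimpleGraph W)
    [DecidableRel G.Adj] [DecidableRel H.Adj] (u : W) :
    (G.join H).degree (Sum.inr u) = H.degree u + Fintype.card V := by
  classical
  have h1 := SimpleGraph.degree_eq_sum_if_adj (R := ℕ) (G.join H) (Sum.inr u)
  have h2 := SimpleGraph.degree_eq_sum_if_adj (R := ℕ) H u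
  rw [Fintype.sum_sum_type] at h1
  simp only [Nat.cast_id] at h1 h2
  rw [h1, h2]
  have h3 : ∀ w : V, (if (G.join H).Adj (Sum.inr u) (Sum.inl w) then 1 else 0) = 1 := by
    intro w; simp [SimpleGraph.join]
  simp only [h3]
  rw [add_comm (∑ _ : V, 1)]
  have e1 : (∑ v : W, if (G.join H).Adj (Sum.inr u) (Sum.inr v) then 1 else 0)
      = ∑ v : W, if H.Adj u v then 1 else 0 :=
    Finset.sum_congr rfl fun v _ => if_congr Iff.rfl rfl rfl
  rw [e1, Finset.sum_const, smul_eq_mul, mul_one, Finset.card_univ]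

lemma lapMatrix_join (G : SimpleGraph V) (H : SimpleGraph W)
    [DecidableRel G.Adj] [DecidableRel H.Adj] :
    (G.join H).lapMatrix ℝ =
      fromBlocks (G.lapMatrix ℝ + (Fintype.card W : ℝ) • 1) (-Matrix.of fun _ _ => (1:ℝ))
        (-Matrix.of fun _ _ => (1:ℝ)) (H.lapMatrix ℝ + (Fintype.card V : ℝ) • 1) := by
  ext (i | i) (j | j) <;>
    simp only [lapMatrix, degMatrix, adjMatrix, Matrix.sub_apply, diagonal_apply, fromBlocks_apply₁₁,
      fromBlocks_apply₁₂, fromBlocks_apply₂₁, fromBlocks_apply₂₂, Matrix.add_apply, Matrix.smul_apply,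
      one_apply, of_apply, Matrix.neg_apply, Pi.add_apply]
  · rcases eq_or_ne i j with rfl | hij
    · rw [if_pos rfl, if_pos rfl, join_degree_inl, if_pos rfl]
      have h4 : ¬ (G.join H).Adj (Sum.inl i) (Sum.inl i) := by simp
      rw [if_neg h4, if_neg (G.loopless.irrefl i)]
      push_cast [smul_eq_mul]; ring
    · have h4 : (Sum.inl i : V ⊕ W) ≠ Sum.inl j := by simpa using hij
      rw [if_neg h4, if_neg hij, if_neg hij]
      have h5 : (G.join H).Adj (Sum.inl i) (Sum.inl j) ↔ G.Adj i j := Iff.rfl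
      rw [if_congr h5 rfl rfl]
      simp
  · have h4 : (Sum.inl i : V ⊕ W) ≠ Sum.inr j := by simp
    rw [if_neg h4]
    have h5 : (G.join H).Adj (Sum.inl i) (Sum.inr j) := trivial
    rw [if_pos h5]; norm_num
  · have h4 : (Sum.inr i : V ⊕ W) ≠ Sum.inl j := by simp
    rw [if_neg h4]
    have h5 : (G.join H).Adj (Sum.inr i) (Sum.inl j) := trivial
    rw [if_pos h5]; norm_num
  · rcases eq_or_ne i j with rfl | hij
    · rw [if_pos rfl, if_pos rfl, join_degree_inr, if_pos rfl]
      have h4 : ¬ (G.join H).Adj (Sum.inr i) (Sum.inr i) := by simp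
      rw [if_neg h4, if_neg (H.loopless.irrefl i)]
      push_cast [smul_eq_mul]; ring
    · have h4 : (Sum.inr i : V ⊕ W) ≠ Sum.inr j := by simpa using hij
      rw [if_neg h4, if_neg hij, if_neg hij]
      have h5 : (G.join H).Adj (Sum.inr i) (Sum.inr j) ↔ H.Adj i j := Iff.rfl
      rw [if_congr h5 rfl rfl]
      simp

lemma edgeCount_eq_card (G : SimpleGraph V) [DecidableRel G.Adj] :
    edgeCount G = G.edgeFinset.card := by
  rw [edgeCount, ← Set.ncard_coe_finset, coe_edgeFinset]

lemma edgeCount_join (G : SimpleGraph V) (H : SimpleGraph W)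
    [DecidableRel G.Adj] [DecidableRel H.Adj] :
    edgeCount (G.join H) = edgeCount G + edgeCount H + Fintype.card V * Fintype.card W := by
  have key : 2 * edgeCount (G.join H) = 2 * (edgeCount G + edgeCount H
      + Fintype.card V * Fintype.card W) := by
    rw [edgeCount_eq_card (G.join H), edgeCount_eq_card G, edgeCount_eq_card H,
      ← sum_degrees_eq_twice_card_edges, Fintype.sum_sum_type]
    simp only [join_degree_inl, join_degree_inr]
    rw [Finset.sum_add_distrib, Finset.sum_add_distrib, sum_degrees_eq_twice_card_edges,
      sum_degrees_eq_twice_card_edges]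
    simp [Finset.sum_const, Finset.card_univ]
    ring
  omega

end JoinBasics

section JoinSpec
variable {n : ℕ}

lemma mem_lapSpec (G : SimpleGraph (Fin n)) [DecidableRel G.Adj]
    (h : (G.lapMatrix ℝ).IsHermitian) {μ : ℝ} :
    μ ∈ lapSpec G ↔ ∃ i, h.eigenvalues i = μ := by
  rw [lapSpec_def G h]
  simp [List.mem_ofFn]

lemma zero_mem_lapSpec (hn : 0 < n) (G : SimpleGraph (Fin n)) [DecidableRel G.Adj] :
    (0 : ℝ) ∈ lapSpec G := by
  have h : (G.lapMatrix ℝ).IsHermitian := (G.posSemidef_lapMatrix ℝ).1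
  rw [mem_lapSpec G h]
  have hdet : (G.lapMatrix ℝ).det = 0 := by
    rw [← Matrix.exists_mulVec_eq_zero_iff]
    refine ⟨fun _ => 1, ?_, G.lapMatrix_mulVec_const_eq_zero⟩
    intro hc
    have := congrFun hc ⟨0, hn⟩
    simp at this
  have h5 := h.det_eq_prod_eigenvalues
  rw [hdet] at h5
  obtain ⟨i, _, hi⟩ := Finset.prod_eq_zero_iff.mp h5.symm
  exact ⟨i, by exact_mod_cast sub_eq_zero.mp (by simpa using hi)⟩

lemma inv_mulVec_ones {A : Matrix (Fin n) (Fin n) ℝ} {y : ℝ} (hy : y ≠ 0)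
    (hA : IsUnit A.det) (h : A *ᵥ (fun _ => 1) = y • (fun _ => (1:ℝ))) :
    A⁻¹ *ᵥ (fun _ => 1) = y⁻¹ • (fun _ => (1:ℝ)) := by
  have h2 : A⁻¹ *ᵥ (A *ᵥ (fun _ => 1)) = A⁻¹ *ᵥ (y • fun _ => (1:ℝ)) := by rw [h]
  rw [mulVec_mulVec, Matrix.nonsing_inv_mul A hA, one_mulVec, mulVec_smul] at h2
  have := congrArg (fun v => y⁻¹ • v) h2
  simpa [smul_smul, inv_mul_cancel₀ hy] using this.symm

lemma lapSpec_join (hn : 0 < n) (G₁ G₂ : SimpleGraph (Fin n))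
    [DecidableRel G₁.Adj] [DecidableRel G₂.Adj] :
    lapSpec (G₁.join G₂) = 0 ::ₘ (2*n : ℝ) ::ₘ
      (((lapSpec G₁).erase 0).map (· + (n:ℝ)) + ((lapSpec G₂).erase 0).map (· + (n:ℝ))) := by
  classical
  set E₁ : Multiset ℝ := (lapSpec G₁).erase 0 with hE₁
  set E₂ : Multiset ℝ := (lapSpec G₂).erase 0 with hE₂
  have h₁ : (G₁.lapMatrix ℝ).IsHermitian := (G₁.posSemidef_lapMatrix ℝ).1
  have h₂ : (G₂.lapMatrix ℝ).IsHermitian := (G₂.posSemidef_lapMatrix ℝ).1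
  have hJ : ((G₁.join G₂).lapMatrix ℝ).IsHermitian := ((G₁.join G₂).posSemidef_lapMatrix ℝ).1
  have hs₁ : lapSpec G₁ = 0 ::ₘ E₁ :=
    (Multiset.cons_erase (zero_mem_lapSpec hn G₁)).symm
  have hs₂ : lapSpec G₂ = 0 ::ₘ E₂ :=
    (Multiset.cons_erase (zero_mem_lapSpec hn G₂)).symm
  apply multiset_eq_of_prod _ _
    ((((lapSpec G₁ + lapSpec G₂).map (· + (n:ℝ))).toFinset) ∪ {(n:ℝ)})
  intro x hx
  simp only [Finset.mem_union, Finset.mem_singleton, Multiset.mem_toFinset, Multiset.mem_map,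
    Multiset.mem_add, not_or, not_exists, not_and] at hx
  obtain ⟨hx1, hx2⟩ := hx
  set y : ℝ := x - n with hy_def
  have hy : y ≠ 0 := sub_ne_zero.mpr hx2
  have hspec : ∀ μ : ℝ, (μ ∈ lapSpec G₁ ∨ μ ∈ lapSpec G₂) → y - μ ≠ 0 := by
    intro μ hμ hc
    exact hx1 μ hμ (by rw [← sub_eq_zero.mp hc]; ring)
  have hL : ((lapSpec (G₁.join G₂)).map (x - ·)).prod
      = (x • (1 : Matrix (Fin n ⊕ Fin n) (Fin n ⊕ Fin n) ℝ) - (G₁.join G₂).lapMatrix ℝ).det := by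
    rw [det_smul_one_sub hJ, lapSpec_def _ hJ, Multiset.map_map]
    rfl
  set A : Matrix (Fin n) (Fin n) ℝ := y • 1 - G₁.lapMatrix ℝ with hA_def
  set B : Matrix (Fin n) (Fin n) ℝ := y • 1 - G₂.lapMatrix ℝ with hB_def
  set Jm : Matrix (Fin n) (Fin n) ℝ := Matrix.of fun _ _ => (1:ℝ) with hJm_def
  have hblock : x • (1 : Matrix (Fin n ⊕ Fin n) (Fin n ⊕ Fin n) ℝ) - (G₁.join G₂).lapMatrix ℝ
      = fromBlocks A Jm Jm B := by
    rw [lapMatrix_join]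
    ext (i | i) (j | j)
    · rcases eq_or_ne i j with rfl | hij
      · simp [hA_def, Matrix.one_apply, Fintype.card_fin, hy_def]; ring
      · have h1 : (Sum.inl i : Fin n ⊕ Fin n) ≠ Sum.inl j := by simpa using hij
        simp [hA_def, Matrix.one_apply, Matrix.one_apply_ne, h1, hij, Fintype.card_fin]
    · simp [hJm_def, Matrix.one_apply]
    · simp [hJm_def, Matrix.one_apply]
    · rcases eq_or_ne i j with rfl | hij
      · simp [hB_def, Matrix.one_apply, Fintype.card_fin, hy_def]; ring
      · have h1 : (Sum.inr i : Fin n ⊕ Fin n) ≠ Sum.inr j := by simpa using hij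
        simp [hB_def, Matrix.one_apply, Matrix.one_apply_ne, h1, hij, Fintype.card_fin]
  have hdetA : A.det = ((lapSpec G₁).map (y - ·)).prod := by
    rw [hA_def, det_smul_one_sub h₁, lapSpec_def _ h₁, Multiset.map_map]
    rfl
  have hdetB : B.det = ((lapSpec G₂).map (y - ·)).prod := by
    rw [hB_def, det_smul_one_sub h₂, lapSpec_def _ h₂, Multiset.map_map]
    rfl
  have hdetA0 : A.det ≠ 0 := by
    rw [hdetA]
    refine Multiset.prod_ne_zero ?_
    intro hc
    obtain ⟨μ, hμ, hμ2⟩ := Multiset.mem_map.mp hc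
    exact hspec μ (Or.inl hμ) hμ2
  have hdetB0 : B.det ≠ 0 := by
    rw [hdetB]
    refine Multiset.prod_ne_zero ?_
    intro hc
    obtain ⟨μ, hμ, hμ2⟩ := Multiset.mem_map.mp hc
    exact hspec μ (Or.inr hμ) hμ2
  have hAunit : IsUnit A.det := isUnit_iff_ne_zero.mpr hdetA0
  have hBunit : IsUnit B.det := isUnit_iff_ne_zero.mpr hdetB0
  haveI : Invertible A := A.invertibleOfIsUnitDet hAunit
  have hAu : A *ᵥ (fun _ => 1) = y • (fun _ => (1:ℝ)) := by
    rw [hA_def, sub_mulVec, G₁.lapMatrix_mulVec_const_eq_zero, sub_zero, smul_mulVec,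
      one_mulVec]
  have hBu : B *ᵥ (fun _ => 1) = y • (fun _ => (1:ℝ)) := by
    rw [hB_def, sub_mulVec, G₂.lapMatrix_mulVec_const_eq_zero, sub_zero, smul_mulVec,
      one_mulVec]
  have hAiu := inv_mulVec_ones hy hAunit hAu
  have hBiu := inv_mulVec_ones hy hBunit hBu
  have hrowsumA : ∀ l, ∑ k, A⁻¹ l k = y⁻¹ := by
    intro l
    have := congrFun hAiu l
    simpa [mulVec, dotProduct] using this
  have hrowsumB : ∀ l, ∑ k, B⁻¹ l k = y⁻¹ := by
    intro l
    have := congrFun hBiu l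
    simpa [mulVec, dotProduct] using this
  have hJAJ : Jm * ⅟A * Jm = ((n : ℝ) * y⁻¹) • Jm := by
    rw [invOf_eq_nonsing_inv]
    ext i j
    simp only [hJm_def, mul_apply, Matrix.of_apply, one_mul, mul_one, Matrix.smul_apply, smul_eq_mul]
    rw [Finset.sum_comm]
    simp [hrowsumA, Finset.card_univ]
  have hdetJ : (fromBlocks A Jm Jm B).det
      = A.det * (B.det * (1 - ((n:ℝ) * y⁻¹) * ((n:ℝ) * y⁻¹))) := by
    rw [det_fromBlocks₁₁, hJAJ]
    congr 1
    have hsplit : B - ((n : ℝ) * y⁻¹) • Jm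
        = B + Matrix.replicateCol Unit (fun _ : Fin n => -((n:ℝ) * y⁻¹))
            * Matrix.replicateRow Unit (fun _ : Fin n => (1:ℝ)) := by
      ext i j
      simp [hJm_def, mul_apply, Matrix.replicateCol, Matrix.replicateRow]
      ring
    rw [hsplit, det_add_replicateCol_mul_replicateRow hBunit]
    congr 1
    rw [det_unique]
    have hentry : ((1 + Matrix.replicateRow Unit (fun _ : Fin n => (1:ℝ)) * B⁻¹
          * Matrix.replicateCol Unit (fun _ : Fin n => -((n:ℝ) * y⁻¹)) : Matrix Unit Unit ℝ)) default default
        = 1 - ((n:ℝ) * y⁻¹) * ((n:ℝ) * y⁻¹) := by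
      simp only [Matrix.add_apply, Matrix.one_apply_eq, Matrix.mul_apply, Matrix.replicateRow_apply,
        Matrix.replicateCol_apply, one_mul]
      have hsum : ∑ j, (∑ k, B⁻¹ k j) * (-((n:ℝ) * y⁻¹))
          = -(((n:ℝ) * y⁻¹) * ((n:ℝ) * y⁻¹)) := by
        rw [← Finset.sum_mul]
        rw [Finset.sum_comm]
        simp only [hrowsumB]
        rw [Finset.sum_const, Finset.card_univ, Fintype.card_fin, nsmul_eq_mul]
        ring
      rw [hsum]
      ring
    rw [hentry]
  rw [hL, hblock, hdetJ, hdetA, hdetB, hs₁, hs₂]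
  simp only [Multiset.map_cons, Multiset.prod_cons, Multiset.map_add,
    Multiset.prod_add, Multiset.map_map, Function.comp]
  have hfun1 : E₁.map (fun μ => x - (μ + (n:ℝ))) = E₁.map (fun μ => y - μ) :=
    Multiset.map_congr rfl (fun μ _ => by simp [hy_def]; ring)
  have hfun2 : E₂.map (fun μ => x - (μ + (n:ℝ))) = E₂.map (fun μ => y - μ) :=
    Multiset.map_congr rfl (fun μ _ => by simp [hy_def]; ring)
  rw [hfun1, hfun2]
  set P₁ := (E₁.map (fun μ => y - μ)).prod
  set P₂ := (E₂.map (fun μ => y - μ)).prod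
  rw [sub_zero, sub_zero]
  have hyx : y = x - n := hy_def
  rw [hyx] at *
  field_simp
  ring

lemma lapEnergy_join (m : ℕ) (hn : 0 < n) (G₁ G₂ : SimpleGraph (Fin n))
    [DecidableRel G₁.Adj] [DecidableRel G₂.Adj]
    (hm₁ : edgeCount G₁ = m) (hm₂ : edgeCount G₂ = m) :
    lapEnergy (G₁.join G₂) =
      (|(0:ℝ) - (2*m/n + n)| + |2*n - (2*(m:ℝ)/n + n)| - 2 * |(0:ℝ) - 2*(m:ℝ)/n|)
        + lapEnergy G₁ + lapEnergy G₂ := by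
  classical
  have hn' : (n : ℝ) ≠ 0 := Nat.cast_ne_zero.mpr hn.ne'
  set E₁ : Multiset ℝ := (lapSpec G₁).erase 0 with hE₁
  set E₂ : Multiset ℝ := (lapSpec G₂).erase 0 with hE₂
  have hs₁ : lapSpec G₁ = 0 ::ₘ E₁ := (Multiset.cons_erase (zero_mem_lapSpec hn G₁)).symm
  have hs₂ : lapSpec G₂ = 0 ::ₘ E₂ := (Multiset.cons_erase (zero_mem_lapSpec hn G₂)).symm
  have ha : 2 * (edgeCount (G₁.join G₂) : ℝ) / (Fintype.card (Fin n ⊕ Fin n) : ℝ)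
      = 2*(m:ℝ)/n + n := by
    rw [edgeCount_join, hm₁, hm₂]
    simp only [Fintype.card_sum, Fintype.card_fin]
    push_cast
    field_simp
    ring
  have hb₁ : 2 * (edgeCount G₁ : ℝ) / (Fintype.card (Fin n) : ℝ) = 2*(m:ℝ)/n := by
    rw [hm₁, Fintype.card_fin]
  have hb₂ : 2 * (edgeCount G₂ : ℝ) / (Fintype.card (Fin n) : ℝ) = 2*(m:ℝ)/n := by
    rw [hm₂, Fintype.card_fin]
  unfold lapEnergy
  rw [lapSpec_join hn G₁ G₂, ha, hb₁, hb₂, hs₁, hs₂]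
  simp only [Multiset.map_cons, Multiset.sum_cons, Multiset.map_add, Multiset.sum_add,
    Multiset.map_map, Function.comp, Multiset.erase_cons_head]
  have hfun1 : E₁.map (fun μ => |μ + (n:ℝ) - (2*(m:ℝ)/n + n)|)
      = E₁.map (fun μ => |μ - 2*(m:ℝ)/n|) :=
    Multiset.map_congr rfl (fun μ _ => by ring_nf)
  have hfun2 : E₂.map (fun μ => |μ + (n:ℝ) - (2*(m:ℝ)/n + n)|)
      = E₂.map (fun μ => |μ - 2*(m:ℝ)/n|) :=
    Multiset.map_congr rfl (fun μ _ => by ring_nf)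
  rw [hfun1, hfun2]
  ring

end JoinSpec

theorem stmt16 (n m : ℕ)
    (G₁ G₁' G₂ G₂' : SimpleGraph (Fin n))
    (hm₁ : edgeCount G₁ = m) (hm₁' : edgeCount G₁' = m)
    (hm₂ : edgeCount G₂ = m) (hm₂' : edgeCount G₂' = m)
    (h₁ : lapEnergy G₁ = lapEnergy G₁') (h₂ : lapEnergy G₂ = lapEnergy G₂') :
    lapEnergy (SimpleGraph.join G₁ G₂) = lapEnergy (SimpleGraph.join G₁' G₂') := by
  classical
  rcases Nat.eq_zero_or_pos n with rfl | hn
  · have hz : ∀ (H₁ H₂ : SimpleGraph (Fin 0)), lapEnergy (H₁.join H₂) = 0 := by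
      intro H₁ H₂
      have hspec0 : lapSpec (H₁.join H₂) = 0 := by
        rw [lapSpec_def _ ((H₁.join H₂).posSemidef_lapMatrix ℝ).1]
        simp
      rw [lapEnergy, hspec0]
      simp
    rw [hz G₁ G₂, hz G₁' G₂']
  · rw [lapEnergy_join m hn G₁ G₂ hm₁ hm₂, lapEnergy_join m hn G₁' G₂' hm₁' hm₂', h₁, h₂]
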